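/- Let f : X → GL_n(ℂ) be a morphism of algebraic varieties whose image lies in a single Bruhat cell B π B for a permutation π. For any two factorizations f = u₁ π t u₂ = u₁' π t' u₂' with u₁, u₂, u₁', u₂' : X → U regular and t, t' : X → T regular, the 2-forms (u₁ | π t u₂) and (u₁' | π t' u₂') coincide. -/

import Mathlib

attribute [local instance] Matrix.normedAddCommGroup Matrix.normedSpace

/-- For maps `f, g : X → GL_n(ℂ)`, the scalar 2-form `(f|g) = trace(f⁻¹ df ∧ dg g⁻¹)`,
evaluated at a point `x` on a pair of tangent vectors `(v, w)`. -/
noncomputable def pairForm {E : Type*} [NormedAddCommGroup E] [NormedSpace ℂ E] {n : ℕ}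
    (f g : E → Matrix (Fin n) (Fin n) ℂ) (x v w : E) : ℂ :=
  ((f x)⁻¹ * fderiv ℂ f x v * fderiv ℂ g x w * (g x)⁻¹).trace
    - ((f x)⁻¹ * fderiv ℂ f x w * fderiv ℂ g x v * (g x)⁻¹).trace

/-- A matrix is unipotent upper-triangular. -/
def IsUni {n : ℕ} (M : Matrix (Fin n) (Fin n) ℂ) : Prop :=
  M.BlockTriangular (id : Fin n → Fin n) ∧ ∀ i, M i i = 1

/-- A matrix is diagonal and invertible. -/
def IsTor {n : ℕ} (M : Matrix (Fin n) (Fin n) ℂ) : Prop :=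
  (∀ i j, i ≠ j → M i j = 0) ∧ ∀ i, M i i ≠ 0

section Aux

open Matrix

variable {E : Type*} [NormedAddCommGroup E] [NormedSpace ℂ E] {n : ℕ}

/-! ### Calculus helpers -/

noncomputable def mulCLM (n : ℕ) : Matrix (Fin n) (Fin n) ℂ →L[ℂ]
    Matrix (Fin n) (Fin n) ℂ →L[ℂ] Matrix (Fin n) (Fin n) ℂ :=
  LinearMap.toContinuousLinearMap
    { toFun := fun A => LinearMap.toContinuousLinearMap (LinearMap.mul ℂ _ A)
      map_add' := fun A B => by ext C; simp [add_mul]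
      map_smul' := fun c A => by ext C; simp [smul_mul_assoc] }

@[simp] lemma mulCLM_apply (A B : Matrix (Fin n) (Fin n) ℂ) : mulCLM n A B = A * B := rfl

theorem hasFDerivAt_matmul {p q : E → Matrix (Fin n) (Fin n) ℂ} {x : E}
    (hp : DifferentiableAt ℂ p x) (hq : DifferentiableAt ℂ q x) :
    HasFDerivAt (fun y => p y * q y)
      ((mulCLM n).precompR E (p x) (fderiv ℂ q x)
        + (mulCLM n).precompL E (fderiv ℂ p x) (q x)) x :=
  (mulCLM n).hasFDerivAt_of_bilinear hp.hasFDerivAt hq.hasFDerivAt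

theorem Differentiable.matmul {p q : E → Matrix (Fin n) (Fin n) ℂ}
    (hp : Differentiable ℂ p) (hq : Differentiable ℂ q) :
    Differentiable ℂ (fun y => p y * q y) :=
  fun x => (hasFDerivAt_matmul (hp x) (hq x)).differentiableAt

theorem fderiv_matmul {p q : E → Matrix (Fin n) (Fin n) ℂ} {x : E}
    (hp : DifferentiableAt ℂ p x) (hq : DifferentiableAt ℂ q x) (v : E) :
    fderiv ℂ (fun y => p y * q y) x v
      = fderiv ℂ p x v * q x + p x * fderiv ℂ q x v := by
  erw [(hasFDerivAt_matmul hp hq).fderiv]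
  simp [add_comm]
  rfl

noncomputable def entryCLM (n : ℕ) (i j : Fin n) : Matrix (Fin n) (Fin n) ℂ →L[ℂ] ℂ :=
  LinearMap.toContinuousLinearMap
    { toFun := fun A => A i j, map_add' := fun _ _ => rfl, map_smul' := fun _ _ => rfl }

theorem fderiv_entry {a : E → Matrix (Fin n) (Fin n) ℂ} {x : E}
    (ha : DifferentiableAt ℂ a x) (i j : Fin n) (v : E) :
    fderiv ℂ a x v i j = fderiv ℂ (fun y => a y i j) x v := by
  have h : (fun y => a y i j) = fun y => entryCLM n i j (a y) := rfl
  rw [h]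
  have h2 := (((entryCLM n i j).hasFDerivAt (x := a x)).comp x ha.hasFDerivAt).fderiv
  rw [show (fun y => (entryCLM n i j) (a y)) = (entryCLM n i j) ∘ a from rfl, h2]
  rfl

theorem fderiv_entry_const {a : E → Matrix (Fin n) (Fin n) ℂ} {x : E}
    (ha : DifferentiableAt ℂ a x) {i j : Fin n} {c : ℂ}
    (h : ∀ y, a y i j = c) (v : E) :
    fderiv ℂ a x v i j = 0 := by
  rw [fderiv_entry ha i j v]
  have h2 : (fun y => a y i j) = fun _ => c := funext h
  rw [h2, fderiv_fun_const]
  rfl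

/-! ### Triangularity helpers -/

theorem diag_mul_zero {X Y : Matrix (Fin n) (Fin n) ℂ} (hX : X.BlockTriangular id)
    (hX0 : ∀ i, X i i = 0) (hY : Y.BlockTriangular id) (i : Fin n) : (X * Y) i i = 0 := by
  rw [Matrix.mul_apply]
  apply Finset.sum_eq_zero
  intro k _
  rcases lt_trichotomy i k with h | h | h
  · rw [hY (show (id i : Fin n) < id k from h), mul_zero]
  · rw [← h, hX0, zero_mul]
  · rw [hX (show (id k : Fin n) < id i from h), zero_mul]

theorem trace_mul_zero {X Y : Matrix (Fin n) (Fin n) ℂ} (hX : X.BlockTriangular id)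
    (hX0 : ∀ i, X i i = 0) (hY : Y.BlockTriangular id) : (X * Y).trace = 0 := by
  rw [Matrix.trace]
  apply Finset.sum_eq_zero
  intro i _
  exact diag_mul_zero hX hX0 hY i

theorem diag_mul_tri {X Y : Matrix (Fin n) (Fin n) ℂ} (hX : X.BlockTriangular id)
    (hY : Y.BlockTriangular id) (i : Fin n) : (X * Y) i i = X i i * Y i i := by
  rw [Matrix.mul_apply, Finset.sum_eq_single i]
  · intro k _ hk
    rcases lt_or_gt_of_ne hk with h | h
    · rw [hX (show (id k : Fin n) < id i from h), zero_mul]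
    · rw [hY (show (id i : Fin n) < id k from h), mul_zero]
  · intro h; exact absurd (Finset.mem_univ i) h

theorem IsUni.det_eq_one {A : Matrix (Fin n) (Fin n) ℂ} (h : IsUni A) : A.det = 1 := by
  rw [Matrix.det_of_upperTriangular h.1]
  simp [h.2]

theorem IsUni.isUnit_det {A : Matrix (Fin n) (Fin n) ℂ} (h : IsUni A) : IsUnit A.det := by
  rw [h.det_eq_one]; exact isUnit_one

theorem IsTor.blockTriangular {A : Matrix (Fin n) (Fin n) ℂ} (h : IsTor A) :
    A.BlockTriangular (id : Fin n → Fin n) :=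
  fun i j hij => h.1 i j (ne_of_gt hij)

theorem IsTor.isUnit_det {A : Matrix (Fin n) (Fin n) ℂ} (h : IsTor A) : IsUnit A.det := by
  rw [Matrix.det_of_upperTriangular h.blockTriangular, isUnit_iff_ne_zero,
    Finset.prod_ne_zero_iff]
  exact fun i _ => h.2 i

theorem IsUni.mul {A B : Matrix (Fin n) (Fin n) ℂ} (hA : IsUni A) (hB : IsUni B) :
    IsUni (A * B) :=
  ⟨hA.1.mul hB.1, fun i => by rw [diag_mul_tri hA.1 hB.1, hA.2, hB.2, one_mul]⟩

theorem blockTriangular_inv {A : Matrix (Fin n) (Fin n) ℂ} {α : Type*} [LinearOrder α]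
    {b : Fin n → α} (hA : A.BlockTriangular b) (h : IsUnit A.det) :
    A⁻¹.BlockTriangular b := by
  letI := A.invertibleOfIsUnitDet h
  exact Matrix.blockTriangular_inv_of_blockTriangular hA

theorem IsUni.inv {A : Matrix (Fin n) (Fin n) ℂ} (hA : IsUni A) : IsUni A⁻¹ := by
  have hbt := blockTriangular_inv hA.1 hA.isUnit_det
  refine ⟨hbt, fun i => ?_⟩
  have h1 : (A⁻¹ * A) i i = A⁻¹ i i * A i i := diag_mul_tri hbt hA.1 i
  rw [Matrix.nonsing_inv_mul A hA.isUnit_det] at h1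
  rw [hA.2 i, mul_one, Matrix.one_apply_eq] at h1
  exact h1.symm

theorem isUnit_det_mul {A B : Matrix (Fin n) (Fin n) ℂ} (hA : IsUnit A.det)
    (hB : IsUnit B.det) : IsUnit (A * B).det := by
  rw [Matrix.det_mul]; exact hA.mul hB

/-! ### Nilpotency and the inverse of a unipotent matrix -/

theorem strict_pow_entry {X : Matrix (Fin n) (Fin n) ℂ} (hX : X.BlockTriangular id)
    (hX0 : ∀ i, X i i = 0) :
    ∀ (k : ℕ) (i j : Fin n), (j : ℕ) < (i : ℕ) + k → (X ^ k) i j = 0 := by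
  intro k
  induction k with
  | zero =>
    intro i j h
    rw [pow_zero]
    exact Matrix.one_apply_ne (fun he => by rw [he] at h; omega)
  | succ k ih =>
    intro i j h
    rw [pow_succ, Matrix.mul_apply]
    apply Finset.sum_eq_zero
    intro l _
    by_cases hl : (l : ℕ) < (i : ℕ) + k
    · rw [ih i l hl, zero_mul]
    · have hjl : (j : ℕ) ≤ (l : ℕ) := by omega
      rcases eq_or_lt_of_le hjl with h1 | h1
      · have : j = l := Fin.ext h1
        rw [← this, hX0, mul_zero]
      · rw [hX (show (id j : Fin n) < id l from h1), mul_zero]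

theorem strict_pow_eq_zero {X : Matrix (Fin n) (Fin n) ℂ} (hX : X.BlockTriangular id)
    (hX0 : ∀ i, X i i = 0) : X ^ n = 0 := by
  ext i j
  rw [strict_pow_entry hX hX0 n i j (by omega)]
  rfl

theorem uni_inv_eq {A : Matrix (Fin n) (Fin n) ℂ} (hA : IsUni A) :
    A⁻¹ = ∑ k ∈ Finset.range n, (1 - A) ^ k := by
  apply Matrix.inv_eq_left_inv
  have h1 : ((1 : Matrix (Fin n) (Fin n) ℂ) - A).BlockTriangular id :=
    (Matrix.blockTriangular_one).sub hA.1
  have h0 : ∀ i, ((1 : Matrix (Fin n) (Fin n) ℂ) - A) i i = 0 := by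
    intro i
    simp [Matrix.sub_apply, Matrix.one_apply_eq, hA.2 i]
  have hnil : ((1 : Matrix (Fin n) (Fin n) ℂ) - A) ^ n = 0 := strict_pow_eq_zero h1 h0
  have hgeo := geom_sum_mul ((1 : Matrix (Fin n) (Fin n) ℂ) - A) n
  rw [hnil] at hgeo
  have h2 : ((1 : Matrix (Fin n) (Fin n) ℂ) - A) - 1 = -A := by abel
  rw [h2, mul_neg, zero_sub] at hgeo
  exact neg_inj.mp hgeo

/-! ### Permutation matrices -/

theorem permMatrix_mul_apply (σ : Equiv.Perm (Fin n)) (X : Matrix (Fin n) (Fin n) ℂ)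
    (i j : Fin n) : (σ.permMatrix ℂ * X) i j = X (σ i) j := by
  rw [Equiv.Perm.permMatrix, PEquiv.toMatrix_toPEquiv_mul]
  rfl

theorem mul_permMatrix_apply (σ : Equiv.Perm (Fin n)) (X : Matrix (Fin n) (Fin n) ℂ)
    (i j : Fin n) : (X * σ.permMatrix ℂ) i j = X i (σ.symm j) := by
  rw [Equiv.Perm.permMatrix, PEquiv.mul_toMatrix_toPEquiv]
  rfl

theorem permMatrix_mul_inv_self (σ : Equiv.Perm (Fin n)) :
    σ.permMatrix ℂ * (σ⁻¹).permMatrix ℂ = 1 := by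
  ext i j
  rw [permMatrix_mul_apply]
  simp [Equiv.Perm.permMatrix, PEquiv.toMatrix_apply, Equiv.toPEquiv_apply, Matrix.one_apply,
    Equiv.Perm.inv_def, Equiv.symm_apply_apply, eq_comm]

theorem permMatrix_inv (σ : Equiv.Perm (Fin n)) :
    (σ.permMatrix ℂ)⁻¹ = (σ⁻¹).permMatrix ℂ :=
  Matrix.inv_eq_right_inv (permMatrix_mul_inv_self σ)

theorem permMatrix_isUnit_det (σ : Equiv.Perm (Fin n)) : IsUnit (σ.permMatrix ℂ).det := by
  rw [Matrix.det_permutation]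
  rcases Int.units_eq_one_or (Equiv.Perm.sign σ) with h | h <;> rw [h] <;> simp

/-! ### The basic expansion of `pairForm` -/

theorem pairForm_eq {u g : E → Matrix (Fin n) (Fin n) ℂ}
    (hu : Differentiable ℂ u) (hg : Differentiable ℂ g) (x : E)
    (huu : IsUnit (u x).det) (hgu : IsUnit (g x).det) (v w : E) :
    pairForm u g x v w
      = ((fderiv ℂ u x v * (u x)⁻¹)
          * (fderiv ℂ (fun y => u y * g y) x w * (u x * g x)⁻¹)).trace
        - ((fderiv ℂ u x w * (u x)⁻¹)
          * (fderiv ℂ (fun y => u y * g y) x v * (u x * g x)⁻¹)).trace := by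
  simp only [pairForm]
  set U := u x with hU
  set G := g x with hG
  have cU' : ∀ B : Matrix (Fin n) (Fin n) ℂ, U⁻¹ * (U * B) = B :=
    fun B => Matrix.nonsing_inv_mul_cancel_left U B huu
  have cG : ∀ B : Matrix (Fin n) (Fin n) ℂ, G * (G⁻¹ * B) = B :=
    fun B => Matrix.mul_nonsing_inv_cancel_left G B hgu
  have key : ∀ a b : E,
      ((fderiv ℂ u x a * U⁻¹)
          * (fderiv ℂ (fun y => u y * g y) x b * (U * G)⁻¹)).trace
        = (U⁻¹ * fderiv ℂ u x a * fderiv ℂ g x b * G⁻¹).trace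
          + ((fderiv ℂ u x a * U⁻¹) * (fderiv ℂ u x b * U⁻¹)).trace := by
    intro a b
    rw [fderiv_matmul (hu x) (hg x), Matrix.mul_inv_rev]
    have e1 : fderiv ℂ u x a * U⁻¹
          * ((fderiv ℂ u x b * G + U * fderiv ℂ g x b) * (G⁻¹ * U⁻¹))
        = fderiv ℂ u x a * (fderiv ℂ g x b * (G⁻¹ * U⁻¹))
          + fderiv ℂ u x a * U⁻¹ * (fderiv ℂ u x b * U⁻¹) := by
      rw [add_mul, mul_add]
      simp only [Matrix.mul_assoc, cU', cG]
      exact add_comm _ _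
    rw [← hU, ← hG]
    rw [e1, Matrix.trace_add]
    congr 1
    have e2 : fderiv ℂ u x a * (fderiv ℂ g x b * (G⁻¹ * U⁻¹))
        = (fderiv ℂ u x a * fderiv ℂ g x b * G⁻¹) * U⁻¹ := by
      simp only [Matrix.mul_assoc]
    rw [e2, Matrix.trace_mul_comm]
    simp only [Matrix.mul_assoc]
  rw [key v w, key w v,
    Matrix.trace_mul_comm (fderiv ℂ u x v * U⁻¹) (fderiv ℂ u x w * U⁻¹)]
  ring

end Aux

/-- If a map `f : X → GL_n(ℂ)` into the Bruhat cell `B π B` is factored in two ways as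
`u₁ π t u₂ = u₁' π t' u₂'` with `u₁, u₂, u₁', u₂'` valued in `U` and `t, t'` valued in
`T`, then the 2-forms `(u₁ | π t u₂)` and `(u₁' | π t' u₂')` coincide. -/
theorem stmt_7 {E : Type*} [NormedAddCommGroup E] [NormedSpace ℂ E] {n : ℕ}
    (π : Equiv.Perm (Fin n))
    (u₁ u₂ u₁' u₂' t t' : E → Matrix (Fin n) (Fin n) ℂ)
    (hu₁ : Differentiable ℂ u₁) (hu₂ : Differentiable ℂ u₂)
    (hu₁' : Differentiable ℂ u₁') (hu₂' : Differentiable ℂ u₂')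
    (ht : Differentiable ℂ t) (ht' : Differentiable ℂ t')
    (hu₁v : ∀ x, IsUni (u₁ x)) (hu₂v : ∀ x, IsUni (u₂ x))
    (hu₁'v : ∀ x, IsUni (u₁' x)) (hu₂'v : ∀ x, IsUni (u₂' x))
    (htv : ∀ x, IsTor (t x)) (ht'v : ∀ x, IsTor (t' x))
    (hfact : ∀ x, u₁ x * π.permMatrix ℂ * t x * u₂ x
      = u₁' x * π.permMatrix ℂ * t' x * u₂' x) :
    ∀ x v w : E,
      pairForm u₁ (fun y => π.permMatrix ℂ * t y * u₂ y) x v w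
        = pairForm u₁' (fun y => π.permMatrix ℂ * t' y * u₂' y) x v w := by
  intro x v w
  have hPd : IsUnit ((π.permMatrix ℂ : Matrix (Fin n) (Fin n) ℂ)).det := permMatrix_isUnit_det π
  have hg₁ : Differentiable ℂ (fun y => π.permMatrix ℂ * t y * u₂ y) :=
    ((differentiable_const _).matmul ht).matmul hu₂
  have hg₂ : Differentiable ℂ (fun y => π.permMatrix ℂ * t' y * u₂' y) :=
    ((differentiable_const _).matmul ht').matmul hu₂'
  have hg₁dx : IsUnit (π.permMatrix ℂ * t x * u₂ x).det :=
    isUnit_det_mul (isUnit_det_mul hPd (htv x).isUnit_det) (hu₂v x).isUnit_det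
  have hg₂dx : IsUnit (π.permMatrix ℂ * t' x * u₂' x).det :=
    isUnit_det_mul (isUnit_det_mul hPd (ht'v x).isUnit_det) (hu₂'v x).isUnit_det
  rw [pairForm_eq hu₁ hg₁ x (hu₁v x).isUnit_det hg₁dx v w,
    pairForm_eq hu₁' hg₂ x (hu₁'v x).isUnit_det hg₂dx v w]
  have hf : (fun y => u₁ y * (π.permMatrix ℂ * t y * u₂ y))
      = (fun y => u₁' y * (π.permMatrix ℂ * t' y * u₂' y)) := by
    funext y
    simp only [← Matrix.mul_assoc]
    exact hfact y
  have hfx : u₁ x * (π.permMatrix ℂ * t x * u₂ x)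
      = u₁' x * (π.permMatrix ℂ * t' x * u₂' x) := by
    simp only [← Matrix.mul_assoc]; exact hfact x
  rw [hf, hfx]
  suffices key : ∀ a b : E,
      ((fderiv ℂ u₁ x a * (u₁ x)⁻¹)
        * (fderiv ℂ (fun y => u₁' y * (π.permMatrix ℂ * t' y * u₂' y)) x b
            * (u₁' x * (π.permMatrix ℂ * t' x * u₂' x))⁻¹)).trace
      = ((fderiv ℂ u₁' x a * (u₁' x)⁻¹)
        * (fderiv ℂ (fun y => u₁' y * (π.permMatrix ℂ * t' y * u₂' y)) x b
            * (u₁' x * (π.permMatrix ℂ * t' x * u₂' x))⁻¹)).trace by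
    rw [key v w, key w v]
  intro a b
  -- the transition map `fun y => (u₁' y)⁻¹ * u₁ y` and its properties
  have hAf_uni : ∀ y, IsUni ((u₁' y)⁻¹ * u₁ y) := fun y => (hu₁'v y).inv.mul (hu₁v y)
  have hAf_diff : Differentiable ℂ (fun y => (u₁' y)⁻¹ * u₁ y) := by
    have h1 : Differentiable ℂ (fun y => (1 : Matrix (Fin n) (Fin n) ℂ) - u₁' y) :=
      (differentiable_const _).sub hu₁'
    have h2 : ∀ k : ℕ,
        Differentiable ℂ (fun y => ((1 : Matrix (Fin n) (Fin n) ℂ) - u₁' y) ^ k) := by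
      intro k
      induction k with
      | zero => simp only [pow_zero]; exact differentiable_const _
      | succ k ih => simp only [pow_succ]; exact ih.matmul h1
    have h3 : Differentiable ℂ
        (fun y => ∑ k ∈ Finset.range n, ((1 : Matrix (Fin n) (Fin n) ℂ) - u₁' y) ^ k) :=
      Differentiable.fun_sum fun k _ => h2 k
    have h4 : (fun y => (u₁' y)⁻¹ * u₁ y)
        = fun y => (∑ k ∈ Finset.range n, ((1 : Matrix (Fin n) (Fin n) ℂ) - u₁' y) ^ k)
            * u₁ y := by
      funext y
      rw [uni_inv_eq (hu₁'v y)]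
    rw [h4]
    exact h3.matmul hu₁
  -- conjugation formula for the transition map
  have hA_conj : ∀ (y : E) (i j : Fin n),
      ((u₁' y)⁻¹ * u₁ y) i j
        = (t' y * u₂' y * (u₂ y)⁻¹ * (t y)⁻¹) (π i) (π j) := by
    intro y i j
    have hgdet : IsUnit (π.permMatrix ℂ * t y * u₂ y).det :=
      isUnit_det_mul (isUnit_det_mul hPd (htv y).isUnit_det) (hu₂v y).isUnit_det
    have c1 : ∀ B : Matrix (Fin n) (Fin n) ℂ, (u₁' y)⁻¹ * (u₁' y * B) = B :=
      fun B => Matrix.nonsing_inv_mul_cancel_left _ _ (hu₁'v y).isUnit_det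
    have h1 : ((u₁' y)⁻¹ * u₁ y) * (π.permMatrix ℂ * t y * u₂ y)
        = π.permMatrix ℂ * t' y * u₂' y := by
      calc ((u₁' y)⁻¹ * u₁ y) * (π.permMatrix ℂ * t y * u₂ y)
          = (u₁' y)⁻¹ * (u₁ y * π.permMatrix ℂ * t y * u₂ y) := by
            simp only [Matrix.mul_assoc]
        _ = (u₁' y)⁻¹ * (u₁' y * π.permMatrix ℂ * t' y * u₂' y) := by rw [hfact y]
        _ = π.permMatrix ℂ * t' y * u₂' y := by simp only [Matrix.mul_assoc, c1]
    have h2 : (u₁' y)⁻¹ * u₁ y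
        = π.permMatrix ℂ * t' y * u₂' y * (π.permMatrix ℂ * t y * u₂ y)⁻¹ := by
      rw [← h1, Matrix.mul_nonsing_inv_cancel_right _ _ hgdet]
    rw [h2, Matrix.mul_inv_rev, Matrix.mul_inv_rev, permMatrix_inv]
    have h3 : π.permMatrix ℂ * t' y * u₂' y
          * ((u₂ y)⁻¹ * ((π.permMatrix ℂ * t y)⁻¹ : Matrix (Fin n) (Fin n) ℂ))
        = π.permMatrix ℂ * t' y * u₂' y * ((u₂ y)⁻¹ * ((t y)⁻¹ * (π⁻¹).permMatrix ℂ)) := by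
      rw [Matrix.mul_inv_rev, permMatrix_inv]
    have h4 : π.permMatrix ℂ * t' y * u₂' y * ((u₂ y)⁻¹ * ((t y)⁻¹ * (π⁻¹).permMatrix ℂ))
        = π.permMatrix ℂ * ((t' y * u₂' y * (u₂ y)⁻¹ * (t y)⁻¹) * (π⁻¹).permMatrix ℂ) := by
      simp only [Matrix.mul_assoc]
    rw [h4, permMatrix_mul_apply, mul_permMatrix_apply]
    congr 1
  have hCbt : ∀ y : E,
      (t' y * u₂' y * (u₂ y)⁻¹ * (t y)⁻¹).BlockTriangular (id : Fin n → Fin n) :=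
    fun y =>
      (((ht'v y).blockTriangular.mul (hu₂'v y).1).mul
        (blockTriangular_inv (hu₂v y).1 (hu₂v y).isUnit_det)).mul
        (blockTriangular_inv (htv y).blockTriangular (htv y).isUnit_det)
  have hAf_perm : ∀ y : E,
      (((u₁' y)⁻¹ * u₁ y) : Matrix (Fin n) (Fin n) ℂ).BlockTriangular (fun i => π i) := by
    intro y i j hij
    rw [hA_conj y i j]
    exact hCbt y hij
  -- properties of the derivative of the transition map
  have hdA_bt : ∀ c : E,
      (fderiv ℂ (fun y => (u₁' y)⁻¹ * u₁ y) x c).BlockTriangular (id : Fin n → Fin n) := by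
    intro c i j hij
    exact fderiv_entry_const (hAf_diff x) (fun y => (hAf_uni y).1 hij) c
  have hdA_btπ : ∀ c : E,
      (fderiv ℂ (fun y => (u₁' y)⁻¹ * u₁ y) x c).BlockTriangular (fun i => π i) := by
    intro c i j hij
    exact fderiv_entry_const (hAf_diff x) (fun y => hAf_perm y hij) c
  have hdA_diag : ∀ (c : E) (i : Fin n),
      fderiv ℂ (fun y => (u₁' y)⁻¹ * u₁ y) x c i i = 0 := by
    intro c i
    exact fderiv_entry_const (hAf_diff x) (fun y => (hAf_uni y).2 i) c
  -- the value of the transition map at `x`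
  have hAx_uni : IsUni ((u₁' x)⁻¹ * u₁ x) := hAf_uni x
  have hAxd : IsUnit (((u₁' x)⁻¹ * u₁ x) : Matrix (Fin n) (Fin n) ℂ).det := hAx_uni.isUnit_det
  have hAxinv_bt : ((((u₁' x)⁻¹ * u₁ x) : Matrix (Fin n) (Fin n) ℂ)⁻¹).BlockTriangular
      (id : Fin n → Fin n) := blockTriangular_inv hAx_uni.1 hAxd
  have hAxinv_btπ : ((((u₁' x)⁻¹ * u₁ x) : Matrix (Fin n) (Fin n) ℂ)⁻¹).BlockTriangular
      (fun i => π i) := blockTriangular_inv (hAf_perm x) hAxd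
  -- η and its properties
  have hη_bt : ∀ c : E,
      ((fderiv ℂ (fun y => (u₁' y)⁻¹ * u₁ y) x c * ((u₁' x)⁻¹ * u₁ x)⁻¹)).BlockTriangular
        (id : Fin n → Fin n) := fun c => (hdA_bt c).mul hAxinv_bt
  have hη_btπ : ∀ c : E,
      ((fderiv ℂ (fun y => (u₁' y)⁻¹ * u₁ y) x c * ((u₁' x)⁻¹ * u₁ x)⁻¹)).BlockTriangular
        (fun i => π i) := fun c => (hdA_btπ c).mul hAxinv_btπ
  have hη_diag : ∀ (c : E) (i : Fin n),
      (fderiv ℂ (fun y => (u₁' y)⁻¹ * u₁ y) x c * ((u₁' x)⁻¹ * u₁ x)⁻¹) i i = 0 :=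
    fun c => diag_mul_zero (hdA_bt c) (hdA_diag c) hAxinv_bt
  -- decomposition of the derivative of u₁
  have hu1_eq : u₁ = fun y => u₁' y * ((u₁' y)⁻¹ * u₁ y) :=
    funext fun y => (Matrix.mul_nonsing_inv_cancel_left _ _ (hu₁'v y).isUnit_det).symm
  have hder : ∀ c : E, fderiv ℂ u₁ x c
      = fderiv ℂ u₁' x c * ((u₁' x)⁻¹ * u₁ x)
        + u₁' x * fderiv ℂ (fun y => (u₁' y)⁻¹ * u₁ y) x c := by
    intro c
    have h5 : fderiv ℂ u₁ x = fderiv ℂ (fun y => u₁' y * ((u₁' y)⁻¹ * u₁ y)) x := by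
      rw [← hu1_eq]
    rw [h5, fderiv_matmul (hu₁' x) (hAf_diff x) c]
  have hUinv : (u₁ x)⁻¹ = (((u₁' x)⁻¹ * u₁ x) : Matrix (Fin n) (Fin n) ℂ)⁻¹ * (u₁' x)⁻¹ := by
    rw [show (u₁ x)⁻¹ = (u₁' x * ((u₁' x)⁻¹ * u₁ x))⁻¹ from by
      rw [Matrix.mul_nonsing_inv_cancel_left _ _ (hu₁'v x).isUnit_det]]
    rw [Matrix.mul_inv_rev]
  have hdelta : ∀ c : E, fderiv ℂ u₁ x c * (u₁ x)⁻¹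
      = fderiv ℂ u₁' x c * (u₁' x)⁻¹
        + u₁' x * (fderiv ℂ (fun y => (u₁' y)⁻¹ * u₁ y) x c * ((u₁' x)⁻¹ * u₁ x)⁻¹
            * (u₁' x)⁻¹) := by
    intro c
    rw [hder c, hUinv, add_mul]
    congr 1
    · rw [Matrix.mul_assoc, Matrix.mul_nonsing_inv_cancel_left _ _ hAxd]
    · simp only [Matrix.mul_assoc]
  rw [hdelta a, add_mul, Matrix.trace_add]
  have hDF' : fderiv ℂ (fun y => u₁' y * (π.permMatrix ℂ * t' y * u₂' y)) x b
      = fderiv ℂ u₁' x b * (π.permMatrix ℂ * t' x * u₂' x)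
        + u₁' x * fderiv ℂ (fun y => π.permMatrix ℂ * t' y * u₂' y) x b :=
    fderiv_matmul (hu₁' x) (hg₂ x) b
  rw [hDF', Matrix.mul_inv_rev, add_mul, mul_add, Matrix.trace_add]
  -- it remains to prove that the `δ`-term has vanishing trace
  have cU1' : ∀ B : Matrix (Fin n) (Fin n) ℂ, (u₁' x)⁻¹ * (u₁' x * B) = B :=
    fun B => Matrix.nonsing_inv_mul_cancel_left _ _ (hu₁'v x).isUnit_det
  have cc : (u₁' x)⁻¹ * u₁' x = 1 := Matrix.nonsing_inv_mul _ (hu₁'v x).isUnit_det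
  have hU1'invbt : (((u₁' x)⁻¹ : Matrix (Fin n) (Fin n) ℂ)).BlockTriangular
      (id : Fin n → Fin n) := blockTriangular_inv (hu₁'v x).1 (hu₁'v x).isUnit_det
  have hD1'bt : ∀ c : E, (fderiv ℂ u₁' x c).BlockTriangular (id : Fin n → Fin n) :=
    fun c i j hij => fderiv_entry_const (hu₁' x) (fun y => (hu₁'v y).1 hij) c
  have hDt'bt : ∀ c : E, (fderiv ℂ t' x c).BlockTriangular (id : Fin n → Fin n) :=
    fun c i j hij =>
      fderiv_entry_const (ht' x) (fun y => (ht'v y).1 i j (Ne.symm (ne_of_lt hij))) c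
  have hD2'bt : ∀ c : E, (fderiv ℂ u₂' x c).BlockTriangular (id : Fin n → Fin n) :=
    fun c i j hij => fderiv_entry_const (hu₂' x) (fun y => (hu₂'v y).1 hij) c
  have hH'det : IsUnit (t' x * u₂' x).det :=
    isUnit_det_mul (ht'v x).isUnit_det (hu₂'v x).isUnit_det
  have hB'bt : (fderiv ℂ (fun y => t' y * u₂' y) x b * (t' x * u₂' x)⁻¹).BlockTriangular
      (id : Fin n → Fin n) := by
    have h6 : (fderiv ℂ (fun y => t' y * u₂' y) x b).BlockTriangular (id : Fin n → Fin n) := by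
      rw [fderiv_matmul (ht' x) (hu₂' x) b]
      exact ((hDt'bt b).mul (hu₂'v x).1).add ((ht'v x).blockTriangular.mul (hD2'bt b))
    exact h6.mul (blockTriangular_inv ((ht'v x).blockTriangular.mul (hu₂'v x).1) hH'det)
  -- the conjugated ξ matrix
  have hξ_apply : ∀ i j : Fin n,
      ((π⁻¹).permMatrix ℂ
          * (fderiv ℂ (fun y => (u₁' y)⁻¹ * u₁ y) x a * ((u₁' x)⁻¹ * u₁ x)⁻¹)
          * π.permMatrix ℂ) i j
        = (fderiv ℂ (fun y => (u₁' y)⁻¹ * u₁ y) x a * ((u₁' x)⁻¹ * u₁ x)⁻¹)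
            (π⁻¹ i) (π⁻¹ j) := by
    intro i j
    rw [mul_permMatrix_apply, permMatrix_mul_apply]
    rfl
  have hξ_bt : ((π⁻¹).permMatrix ℂ
      * (fderiv ℂ (fun y => (u₁' y)⁻¹ * u₁ y) x a * ((u₁' x)⁻¹ * u₁ x)⁻¹)
      * π.permMatrix ℂ).BlockTriangular (id : Fin n → Fin n) := by
    intro i j hij
    rw [hξ_apply i j]
    refine hη_btπ a ?_
    show π (π⁻¹ j) < π (π⁻¹ i)
    simpa using hij
  have hξ_diag : ∀ i : Fin n, ((π⁻¹).permMatrix ℂ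
      * (fderiv ℂ (fun y => (u₁' y)⁻¹ * u₁ y) x a * ((u₁' x)⁻¹ * u₁ x)⁻¹)
      * π.permMatrix ℂ) i i = 0 := by
    intro i
    rw [hξ_apply i i]
    exact hη_diag a _
  -- structure of the derivative of g₂
  have hDG2 : fderiv ℂ (fun y => π.permMatrix ℂ * t' y * u₂' y) x b
      = π.permMatrix ℂ * fderiv ℂ (fun y => t' y * u₂' y) x b := by
    have e : (fun y => π.permMatrix ℂ * t' y * u₂' y)
        = fun y => π.permMatrix ℂ * (t' y * u₂' y) := by
      funext y
      rw [Matrix.mul_assoc]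
    rw [e, fderiv_matmul (differentiableAt_const _) ((ht'.matmul hu₂') x) b]
    simp
  have hG2inv : ((π.permMatrix ℂ * t' x * u₂' x : Matrix (Fin n) (Fin n) ℂ))⁻¹
      = (t' x * u₂' x)⁻¹ * (π⁻¹).permMatrix ℂ := by
    rw [show π.permMatrix ℂ * t' x * u₂' x = π.permMatrix ℂ * (t' x * u₂' x) from
      Matrix.mul_assoc _ _ _, Matrix.mul_inv_rev, permMatrix_inv]
  -- the δ-term splits into two traces
  rw [mul_add, Matrix.trace_add]
  have hT1 : (u₁' x * (fderiv ℂ (fun y => (u₁' y)⁻¹ * u₁ y) x a * ((u₁' x)⁻¹ * u₁ x)⁻¹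
        * (u₁' x)⁻¹)
      * (fderiv ℂ u₁' x b * (π.permMatrix ℂ * t' x * u₂' x)
          * ((π.permMatrix ℂ * t' x * u₂' x)⁻¹ * (u₁' x)⁻¹))).trace = 0 := by
    rw [show fderiv ℂ u₁' x b * (π.permMatrix ℂ * t' x * u₂' x)
          * ((π.permMatrix ℂ * t' x * u₂' x)⁻¹ * (u₁' x)⁻¹)
        = fderiv ℂ u₁' x b * (u₁' x)⁻¹ from by
      rw [Matrix.mul_assoc, Matrix.mul_nonsing_inv_cancel_left _ _ hg₂dx]]
    rw [show u₁' x * (fderiv ℂ (fun y => (u₁' y)⁻¹ * u₁ y) x a * ((u₁' x)⁻¹ * u₁ x)⁻¹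
            * (u₁' x)⁻¹) * (fderiv ℂ u₁' x b * (u₁' x)⁻¹)
        = u₁' x * (fderiv ℂ (fun y => (u₁' y)⁻¹ * u₁ y) x a * (((u₁' x)⁻¹ * u₁ x)⁻¹
            * ((u₁' x)⁻¹ * (fderiv ℂ u₁' x b * (u₁' x)⁻¹)))) from by
      simp only [Matrix.mul_assoc]]
    rw [Matrix.trace_mul_comm]
    rw [show fderiv ℂ (fun y => (u₁' y)⁻¹ * u₁ y) x a * (((u₁' x)⁻¹ * u₁ x)⁻¹
            * ((u₁' x)⁻¹ * (fderiv ℂ u₁' x b * (u₁' x)⁻¹))) * u₁' x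
        = (fderiv ℂ (fun y => (u₁' y)⁻¹ * u₁ y) x a * ((u₁' x)⁻¹ * u₁ x)⁻¹)
            * ((u₁' x)⁻¹ * fderiv ℂ u₁' x b) from by
      simp only [Matrix.mul_assoc, cc, Matrix.mul_one]]
    exact trace_mul_zero (hη_bt a) (hη_diag a) (hU1'invbt.mul (hD1'bt b))
  have hT2 : (u₁' x * (fderiv ℂ (fun y => (u₁' y)⁻¹ * u₁ y) x a * ((u₁' x)⁻¹ * u₁ x)⁻¹
        * (u₁' x)⁻¹)
      * (u₁' x * fderiv ℂ (fun y => π.permMatrix ℂ * t' y * u₂' y) x b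
          * ((π.permMatrix ℂ * t' x * u₂' x)⁻¹ * (u₁' x)⁻¹))).trace = 0 := by
    rw [hDG2, hG2inv]
    rw [show u₁' x * (fderiv ℂ (fun y => (u₁' y)⁻¹ * u₁ y) x a * ((u₁' x)⁻¹ * u₁ x)⁻¹
            * (u₁' x)⁻¹)
          * (u₁' x * (π.permMatrix ℂ * fderiv ℂ (fun y => t' y * u₂' y) x b)
            * ((t' x * u₂' x)⁻¹ * (π⁻¹).permMatrix ℂ * (u₁' x)⁻¹))
        = u₁' x * (fderiv ℂ (fun y => (u₁' y)⁻¹ * u₁ y) x a * (((u₁' x)⁻¹ * u₁ x)⁻¹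
            * (π.permMatrix ℂ * (fderiv ℂ (fun y => t' y * u₂' y) x b
              * ((t' x * u₂' x)⁻¹ * ((π⁻¹).permMatrix ℂ * (u₁' x)⁻¹)))))) from by
      simp only [Matrix.mul_assoc, cU1']]
    rw [Matrix.trace_mul_comm]
    rw [show fderiv ℂ (fun y => (u₁' y)⁻¹ * u₁ y) x a * (((u₁' x)⁻¹ * u₁ x)⁻¹
            * (π.permMatrix ℂ * (fderiv ℂ (fun y => t' y * u₂' y) x b
              * ((t' x * u₂' x)⁻¹ * ((π⁻¹).permMatrix ℂ * (u₁' x)⁻¹))))) * u₁' x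
        = (fderiv ℂ (fun y => (u₁' y)⁻¹ * u₁ y) x a * (((u₁' x)⁻¹ * u₁ x)⁻¹
            * (π.permMatrix ℂ * (fderiv ℂ (fun y => t' y * u₂' y) x b
              * (t' x * u₂' x)⁻¹)))) * (π⁻¹).permMatrix ℂ from by
      simp only [Matrix.mul_assoc, cc, Matrix.mul_one]]
    rw [Matrix.trace_mul_comm]
    rw [show (π⁻¹).permMatrix ℂ * (fderiv ℂ (fun y => (u₁' y)⁻¹ * u₁ y) x a
            * (((u₁' x)⁻¹ * u₁ x)⁻¹ * (π.permMatrix ℂ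
              * (fderiv ℂ (fun y => t' y * u₂' y) x b * (t' x * u₂' x)⁻¹))))
        = ((π⁻¹).permMatrix ℂ
            * (fderiv ℂ (fun y => (u₁' y)⁻¹ * u₁ y) x a * ((u₁' x)⁻¹ * u₁ x)⁻¹)
            * π.permMatrix ℂ)
          * (fderiv ℂ (fun y => t' y * u₂' y) x b * (t' x * u₂' x)⁻¹) from by
      simp only [Matrix.mul_assoc]]
    exact trace_mul_zero hξ_bt hξ_diag hB'bt
  rw [hT1, hT2, add_zero, add_zero]
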